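/- arXiv:2605.09333 — 3 statements merged into one kernel-verified Lean document; each statement's English description precedes it below -/
import Mathlib

section
/- Every element of the form x = −(1/2)·1 + v, where v ∈ 𝕆 is purely imaginary (conj v = −v) and n(v) = 3/4, is an idempotent for the para-octonionic product: x ∙ x = x. -/
noncomputable section

open Quaternion

/-- The octonions as the Cayley–Dickson double of the quaternions. -/
abbrev Octo : Type := ℍ[ℝ] × ℍ[ℝ]

/-- Octonionic product: `(a,b)·(c,d) = (a c − (conj d) b, d a + b (conj c))`. -/
def omul (x y : Octo) : Octo :=
  (x.1 * y.1 - star y.2 * x.2, y.2 * x.1 + x.2 * star y.1)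

/-- Octonionic conjugation: `conj (a,b) = (conj a, −b)`. -/
def oconj (x : Octo) : Octo := (star x.1, -x.2)

def oone : Octo := (1, 0)
def oi : Octo := ((⟨0,1,0,0⟩ : ℍ[ℝ]), 0)
def oj : Octo := ((⟨0,0,1,0⟩ : ℍ[ℝ]), 0)
def ok : Octo := ((⟨0,0,0,1⟩ : ℍ[ℝ]), 0)
def ol : Octo := (0, 1)

/-- `h = (i + j + k + l)/2`. -/
def oh : Octo := (2⁻¹ : ℝ) • (oi + oj + ok + ol)

/-- The Coxeter–Dickson basis `b₀,…,b₇`. -/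
def b : Fin 8 → Octo :=
  ![oone, oi, oj, ok, oh, omul oi oh, omul oj oh, omul ok oh]

/-- The Coxeter–Dickson order: the ℤ-span of `b₀,…,b₇`. -/
def CD : Submodule ℤ Octo := Submodule.span ℤ (Set.range b)

/-- The norm: the sum of the squares of the eight real coordinates. -/
def onorm (x : Octo) : ℝ :=
  x.1.re^2 + x.1.imI^2 + x.1.imJ^2 + x.1.imK^2 +
  x.2.re^2 + x.2.imI^2 + x.2.imJ^2 + x.2.imK^2

/-- The bilinear form `⟨x,y⟩`, obtained by polarization of the norm,
so that `x·(conj y) + y·(conj x) = ⟨x,y⟩·1`. -/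
def binner (x y : Octo) : ℝ := onorm (x + y) - onorm x - onorm y

/-- The para-octonionic product `x ∙ y = (conj x)·(conj y)`. -/
def pmul (x y : Octo) : Octo := omul (oconj x) (oconj y)

/-- every `x = −(1/2)·1 + v` with `v` purely imaginary of norm `3/4`
is a para-octonionic idempotent. -/
theorem para_idempotent_sphere (v : Octo) (hv : oconj v = -v)
    (hn : onorm v = 3 / 4) :
    pmul (-(2⁻¹ : ℝ) • oone + v) (-(2⁻¹ : ℝ) • oone + v)
      = -(2⁻¹ : ℝ) • oone + v := by
  have h1 : star v.1 = -v.1 := congrArg Prod.fst hv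
  have hre : v.1.re = 0 := by
    have := congrArg QuaternionAlgebra.re h1
    simp at this; linarith
  simp only [onorm, hre] at hn
  refine Prod.ext (Quaternion.ext _ _ ?_ ?_ ?_ ?_) (Quaternion.ext _ _ ?_ ?_ ?_ ?_) <;>
    simp [pmul, omul, oconj, oone, Quaternion.ext_iff, re_mul, imI_mul, imJ_mul, imK_mul, hre] <;>
    ring_nf <;> nlinarith [hn]

end
end

section
/- The norm, the bilinear form, and the relative trace take values in ℤ[√3] on the scaled Okubo order: for all x, y ∈ 𝒪₀ one has n(x) ∈ ℤ[√3], ⟨x, y⟩ ∈ ℤ[√3], and ⟨x, 1⟩ ∈ ℤ[√3]. -/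
noncomputable section

open Quaternion

/-- The ring `ℤ[√3] = {m + n√3 : m, n ∈ ℤ}` as a subset of `ℝ`. -/
def Zsqrt3 : Set ℝ := {x | ∃ m n : ℤ, x = (m : ℝ) + (n : ℝ) * Real.sqrt 3}

/-- The scaling exponents `(D₀,…,D₇) = (2,2,2,2,4,4,4,4)`. -/
def Dscale : Fin 8 → ℤ := ![2, 2, 2, 2, 4, 4, 4, 4]

/-- The scaled basis `uᵢ = Dᵢ·bᵢ`. -/
def u : Fin 8 → Octo := fun i => Dscale i • b i

/-- The scaled Okubo order `𝒪₀`: all `ℤ[√3]`-linear combinations of `u₀,…,u₇`. -/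
def Ok0 : Set Octo :=
  {x | ∃ c : Fin 8 → ℝ, (∀ i, c i ∈ Zsqrt3) ∧ x = ∑ i, c i • u i}


/-! ### Auxiliary lemmas -/

lemma Zs_int' (m : ℤ) : (m : ℝ) ∈ Zsqrt3 := ⟨m, 0, by simp⟩

lemma Zs_zero' : (0 : ℝ) ∈ Zsqrt3 := by simpa using Zs_int' 0

lemma Zs_add' {a c : ℝ} (ha : a ∈ Zsqrt3) (hc : c ∈ Zsqrt3) : a + c ∈ Zsqrt3 := by
  obtain ⟨m, n, rfl⟩ := ha; obtain ⟨p, q, rfl⟩ := hc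
  exact ⟨m + p, n + q, by push_cast; ring⟩

lemma Zs_neg' {a : ℝ} (ha : a ∈ Zsqrt3) : -a ∈ Zsqrt3 := by
  obtain ⟨m, n, rfl⟩ := ha
  exact ⟨-m, -n, by push_cast; ring⟩

lemma Zs_sub' {a c : ℝ} (ha : a ∈ Zsqrt3) (hc : c ∈ Zsqrt3) : a - c ∈ Zsqrt3 := by
  simpa [sub_eq_add_neg] using Zs_add' ha (Zs_neg' hc)

lemma Zs_mul' {a c : ℝ} (ha : a ∈ Zsqrt3) (hc : c ∈ Zsqrt3) : a * c ∈ Zsqrt3 := by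
  obtain ⟨m, n, rfl⟩ := ha; obtain ⟨p, q, rfl⟩ := hc
  have h3 : Real.sqrt 3 * Real.sqrt 3 = 3 := Real.mul_self_sqrt (by norm_num)
  refine ⟨m * p + 3 * (n * q), m * q + n * p, ?_⟩
  push_cast
  linear_combination ((n : ℝ) * q) * h3

/-- The eight real coordinates of an octonion. -/
def coordFn (m : Fin 8) (x : Octo) : ℝ :=
  ![x.1.re, x.1.imI, x.1.imJ, x.1.imK, x.2.re, x.2.imI, x.2.imJ, x.2.imK] m

/-- The eight real coordinates, as linear maps. -/
def coordL (m : Fin 8) : Octo →ₗ[ℝ] ℝ where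
  toFun := coordFn m
  map_add' x y := by fin_cases m <;> rfl
  map_smul' c x := by fin_cases m <;> rfl

lemma u0eq : u 0 = ((⟨2,0,0,0⟩ : ℍ[ℝ]), (⟨0,0,0,0⟩ : ℍ[ℝ])) := by
  show (2:ℤ) • oone = _
  refine Prod.ext ?_ ?_ <;> apply QuaternionAlgebra.ext <;>
    simp [oone, show ((2:ℍ[ℝ]).re) = 2 from rfl, show ((2:ℍ[ℝ]).imI) = 0 from rfl,
      show ((2:ℍ[ℝ]).imJ) = 0 from rfl, show ((2:ℍ[ℝ]).imK) = 0 from rfl]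

lemma u1eq : u 1 = ((⟨0,2,0,0⟩ : ℍ[ℝ]), (⟨0,0,0,0⟩ : ℍ[ℝ])) := by
  show (2:ℤ) • oi = _
  refine Prod.ext ?_ ?_ <;> apply QuaternionAlgebra.ext <;>
    simp [Quaternion.re_mul, Quaternion.imI_mul, Quaternion.imJ_mul, Quaternion.imK_mul] <;>
    simp [oi, show ((2:ℍ[ℝ]).re) = 2 from rfl, show ((2:ℍ[ℝ]).imI) = 0 from rfl,
      show ((2:ℍ[ℝ]).imJ) = 0 from rfl, show ((2:ℍ[ℝ]).imK) = 0 from rfl]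

lemma u2eq : u 2 = ((⟨0,0,2,0⟩ : ℍ[ℝ]), (⟨0,0,0,0⟩ : ℍ[ℝ])) := by
  show (2:ℤ) • oj = _
  refine Prod.ext ?_ ?_ <;> apply QuaternionAlgebra.ext <;>
    simp [Quaternion.re_mul, Quaternion.imI_mul, Quaternion.imJ_mul, Quaternion.imK_mul] <;>
    simp [oj, show ((2:ℍ[ℝ]).re) = 2 from rfl, show ((2:ℍ[ℝ]).imI) = 0 from rfl,
      show ((2:ℍ[ℝ]).imJ) = 0 from rfl, show ((2:ℍ[ℝ]).imK) = 0 from rfl]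

lemma u3eq : u 3 = ((⟨0,0,0,2⟩ : ℍ[ℝ]), (⟨0,0,0,0⟩ : ℍ[ℝ])) := by
  show (2:ℤ) • ok = _
  refine Prod.ext ?_ ?_ <;> apply QuaternionAlgebra.ext <;>
    simp [Quaternion.re_mul, Quaternion.imI_mul, Quaternion.imJ_mul, Quaternion.imK_mul] <;>
    simp [ok, show ((2:ℍ[ℝ]).re) = 2 from rfl, show ((2:ℍ[ℝ]).imI) = 0 from rfl,
      show ((2:ℍ[ℝ]).imJ) = 0 from rfl, show ((2:ℍ[ℝ]).imK) = 0 from rfl]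

lemma u4eq : u 4 = ((⟨0,2,2,2⟩ : ℍ[ℝ]), (⟨2,0,0,0⟩ : ℍ[ℝ])) := by
  show (4:ℤ) • oh = _
  refine Prod.ext ?_ ?_ <;> apply QuaternionAlgebra.ext <;>
    simp [oh, Quaternion.re_mul, Quaternion.imI_mul, Quaternion.imJ_mul, Quaternion.imK_mul] <;>
    simp [oh, oi, oj, ok, ol, oone, show ((4:ℍ[ℝ]).re) = 4 from rfl,
      show ((4:ℍ[ℝ]).imI) = 0 from rfl, show ((4:ℍ[ℝ]).imJ) = 0 from rfl,
      show ((4:ℍ[ℝ]).imK) = 0 from rfl] <;> norm_num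

lemma u5eq : u 5 = ((⟨-2,0,-2,2⟩ : ℍ[ℝ]), (⟨0,2,0,0⟩ : ℍ[ℝ])) := by
  show (4:ℤ) • omul oi oh = _
  refine Prod.ext ?_ ?_ <;> apply QuaternionAlgebra.ext <;>
    simp [omul, oh, Quaternion.re_mul, Quaternion.imI_mul, Quaternion.imJ_mul, Quaternion.imK_mul] <;>
    simp [omul, oh, oi, oj, ok, ol, oone, show ((4:ℍ[ℝ]).re) = 4 from rfl,
      show ((4:ℍ[ℝ]).imI) = 0 from rfl, show ((4:ℍ[ℝ]).imJ) = 0 from rfl,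
      show ((4:ℍ[ℝ]).imK) = 0 from rfl] <;> norm_num

lemma u6eq : u 6 = ((⟨-2,2,0,-2⟩ : ℍ[ℝ]), (⟨0,0,2,0⟩ : ℍ[ℝ])) := by
  show (4:ℤ) • omul oj oh = _
  refine Prod.ext ?_ ?_ <;> apply QuaternionAlgebra.ext <;>
    simp [omul, oh, Quaternion.re_mul, Quaternion.imI_mul, Quaternion.imJ_mul, Quaternion.imK_mul] <;>
    simp [omul, oh, oi, oj, ok, ol, oone, show ((4:ℍ[ℝ]).re) = 4 from rfl,
      show ((4:ℍ[ℝ]).imI) = 0 from rfl, show ((4:ℍ[ℝ]).imJ) = 0 from rfl,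
      show ((4:ℍ[ℝ]).imK) = 0 from rfl] <;> norm_num

lemma u7eq : u 7 = ((⟨-2,-2,2,0⟩ : ℍ[ℝ]), (⟨0,0,0,2⟩ : ℍ[ℝ])) := by
  show (4:ℤ) • omul ok oh = _
  refine Prod.ext ?_ ?_ <;> apply QuaternionAlgebra.ext <;>
    simp [omul, oh, Quaternion.re_mul, Quaternion.imI_mul, Quaternion.imJ_mul, Quaternion.imK_mul] <;>
    simp [omul, oh, oi, oj, ok, ol, oone, show ((4:ℍ[ℝ]).re) = 4 from rfl,
      show ((4:ℍ[ℝ]).imI) = 0 from rfl, show ((4:ℍ[ℝ]).imJ) = 0 from rfl,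
      show ((4:ℍ[ℝ]).imK) = 0 from rfl] <;> norm_num

lemma cu0 (m : Fin 8) : coordL m (u 0) ∈ Zsqrt3 := by
  rw [show (u 0 : Octo) = _ from u0eq]
  fin_cases m <;>
    first
      | exact ⟨0, 0, by show (0:ℝ) = _; norm_num⟩
      | exact ⟨2, 0, by show (2:ℝ) = _; norm_num⟩
      | exact ⟨-2, 0, by show (-2:ℝ) = _; norm_num⟩

lemma cu1 (m : Fin 8) : coordL m (u 1) ∈ Zsqrt3 := by
  rw [show (u 1 : Octo) = _ from u1eq]
  fin_cases m <;>
    first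
      | exact ⟨0, 0, by show (0:ℝ) = _; norm_num⟩
      | exact ⟨2, 0, by show (2:ℝ) = _; norm_num⟩
      | exact ⟨-2, 0, by show (-2:ℝ) = _; norm_num⟩

lemma cu2 (m : Fin 8) : coordL m (u 2) ∈ Zsqrt3 := by
  rw [show (u 2 : Octo) = _ from u2eq]
  fin_cases m <;>
    first
      | exact ⟨0, 0, by show (0:ℝ) = _; norm_num⟩
      | exact ⟨2, 0, by show (2:ℝ) = _; norm_num⟩
      | exact ⟨-2, 0, by show (-2:ℝ) = _; norm_num⟩

lemma cu3 (m : Fin 8) : coordL m (u 3) ∈ Zsqrt3 := by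
  rw [show (u 3 : Octo) = _ from u3eq]
  fin_cases m <;>
    first
      | exact ⟨0, 0, by show (0:ℝ) = _; norm_num⟩
      | exact ⟨2, 0, by show (2:ℝ) = _; norm_num⟩
      | exact ⟨-2, 0, by show (-2:ℝ) = _; norm_num⟩

lemma cu4 (m : Fin 8) : coordL m (u 4) ∈ Zsqrt3 := by
  rw [show (u 4 : Octo) = _ from u4eq]
  fin_cases m <;>
    first
      | exact ⟨0, 0, by show (0:ℝ) = _; norm_num⟩
      | exact ⟨2, 0, by show (2:ℝ) = _; norm_num⟩
      | exact ⟨-2, 0, by show (-2:ℝ) = _; norm_num⟩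

lemma cu5 (m : Fin 8) : coordL m (u 5) ∈ Zsqrt3 := by
  rw [show (u 5 : Octo) = _ from u5eq]
  fin_cases m <;>
    first
      | exact ⟨0, 0, by show (0:ℝ) = _; norm_num⟩
      | exact ⟨2, 0, by show (2:ℝ) = _; norm_num⟩
      | exact ⟨-2, 0, by show (-2:ℝ) = _; norm_num⟩

lemma cu6 (m : Fin 8) : coordL m (u 6) ∈ Zsqrt3 := by
  rw [show (u 6 : Octo) = _ from u6eq]
  fin_cases m <;>
    first
      | exact ⟨0, 0, by show (0:ℝ) = _; norm_num⟩
      | exact ⟨2, 0, by show (2:ℝ) = _; norm_num⟩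
      | exact ⟨-2, 0, by show (-2:ℝ) = _; norm_num⟩

lemma cu7 (m : Fin 8) : coordL m (u 7) ∈ Zsqrt3 := by
  rw [show (u 7 : Octo) = _ from u7eq]
  fin_cases m <;>
    first
      | exact ⟨0, 0, by show (0:ℝ) = _; norm_num⟩
      | exact ⟨2, 0, by show (2:ℝ) = _; norm_num⟩
      | exact ⟨-2, 0, by show (-2:ℝ) = _; norm_num⟩

lemma coord_u_mem (i m : Fin 8) : coordL m (u i) ∈ Zsqrt3 := by
  fin_cases i <;>
    first
      | exact cu0 m | exact cu1 m | exact cu2 m | exact cu3 m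
      | exact cu4 m | exact cu5 m | exact cu6 m | exact cu7 m

lemma good_of_mem {x : Octo} (hx : x ∈ Ok0) : ∀ m, coordL m x ∈ Zsqrt3 := by
  obtain ⟨c, hc, rfl⟩ := hx
  intro m
  rw [map_sum]
  refine Finset.sum_induction _ (· ∈ Zsqrt3) (fun _ _ => Zs_add') Zs_zero' ?_
  intro i _
  rw [map_smul]
  exact Zs_mul' (hc i) (coord_u_mem i m)

lemma onorm_mem {x : Octo} (h : ∀ m, coordL m x ∈ Zsqrt3) : onorm x ∈ Zsqrt3 := by
  have h0 : x.1.re ∈ Zsqrt3 := h 0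
  have h1 : x.1.imI ∈ Zsqrt3 := h 1
  have h2 : x.1.imJ ∈ Zsqrt3 := h 2
  have h3 : x.1.imK ∈ Zsqrt3 := h 3
  have h4 : x.2.re ∈ Zsqrt3 := h 4
  have h5 : x.2.imI ∈ Zsqrt3 := h 5
  have h6 : x.2.imJ ∈ Zsqrt3 := h 6
  have h7 : x.2.imK ∈ Zsqrt3 := h 7
  unfold onorm
  simp only [sq]
  exact Zs_add' (Zs_add' (Zs_add' (Zs_add' (Zs_add' (Zs_add' (Zs_add'
    (Zs_mul' h0 h0) (Zs_mul' h1 h1)) (Zs_mul' h2 h2)) (Zs_mul' h3 h3))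
    (Zs_mul' h4 h4)) (Zs_mul' h5 h5)) (Zs_mul' h6 h6)) (Zs_mul' h7 h7)

lemma binner_mem {x y : Octo} (hx : ∀ m, coordL m x ∈ Zsqrt3)
    (hy : ∀ m, coordL m y ∈ Zsqrt3) : binner x y ∈ Zsqrt3 := by
  have hxy : ∀ m, coordL m (x + y) ∈ Zsqrt3 := fun m => by
    rw [map_add]; exact Zs_add' (hx m) (hy m)
  exact Zs_sub' (Zs_sub' (onorm_mem hxy) (onorm_mem hx)) (onorm_mem hy)

lemma good_oone : ∀ m, coordL m oone ∈ Zsqrt3 := by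
  intro m
  fin_cases m <;>
    first
      | exact ⟨1, 0, by show (1:ℝ) = _; norm_num⟩
      | exact ⟨0, 0, by show (0:ℝ) = _; norm_num⟩

/-- on the scaled Okubo order the norm, the bilinear form, and the
relative trace `⟨x,1⟩` take values in `ℤ[√3]`. -/
theorem okubo_scaled_order_norm_trace :
    ∀ x ∈ Ok0, ∀ y ∈ Ok0,
      onorm x ∈ Zsqrt3 ∧ binner x y ∈ Zsqrt3 ∧ binner x oone ∈ Zsqrt3 := by
  intro x hx y hy
  exact ⟨onorm_mem (good_of_mem hx), binner_mem (good_of_mem hx) (good_of_mem hy),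
    binner_mem (good_of_mem hx) good_oone⟩

end
end

section
/- The minimum of the direct Okubo shadow is 8: every nonzero x ∈ L_Ok satisfies ⟨x, x⟩ ≥ 8, the value 8 is attained (⟨2b₀, 2b₀⟩ = 8), and in particular L_Ok contains no vector x with ⟨x, x⟩ = 2. -/
noncomputable section

open Quaternion

/-- The direct Okubo metric shadow `L_Ok`: the ℤ-span of `u₀,…,u₇`. -/
def LOk : Submodule ℤ Octo := Submodule.span ℤ (Set.range u)

lemma rep_eq (c : Fin 8 → ℤ) : ∑ i, c i • u i =
    (((⟨2*((c 0 - c 5 - c 6 - c 7 : ℤ):ℝ), 2*((c 1 + c 4 + c 6 - c 7 : ℤ):ℝ),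
        2*((c 2 + c 4 - c 5 + c 7 : ℤ):ℝ), 2*((c 3 + c 4 + c 5 - c 6 : ℤ):ℝ)⟩ : ℍ[ℝ]),
      (⟨2*((c 4 : ℤ):ℝ), 2*((c 5 : ℤ):ℝ), 2*((c 6 : ℤ):ℝ), 2*((c 7 : ℤ):ℝ)⟩ : ℍ[ℝ]))) := by
  have e0 : u 0 = (2:ℤ) • oone := rfl
  have e1 : u 1 = (2:ℤ) • oi := rfl
  have e2 : u 2 = (2:ℤ) • oj := rfl
  have e3 : u 3 = (2:ℤ) • ok := rfl
  have e4 : u 4 = (4:ℤ) • oh := rfl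
  have e5 : u 5 = (4:ℤ) • omul oi oh := rfl
  have e6 : u 6 = (4:ℤ) • omul oj oh := rfl
  have e7 : u 7 = (4:ℤ) • omul ok oh := rfl
  simp only [Fin.sum_univ_eight, e0, e1, e2, e3, e4, e5, e6, e7, smul_smul,
    ← Int.cast_smul_eq_zsmul ℝ]
  obtain ⟨qi, hqi⟩ : ∃ q : ℍ[ℝ], q = ⟨0,1,0,0⟩ := ⟨_, rfl⟩
  obtain ⟨qj, hqj⟩ : ∃ q : ℍ[ℝ], q = ⟨0,0,1,0⟩ := ⟨_, rfl⟩
  obtain ⟨qk, hqk⟩ : ∃ q : ℍ[ℝ], q = ⟨0,0,0,1⟩ := ⟨_, rfl⟩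
  have hoi : oi = (qi, 0) := by rw [hqi]; rfl
  have hoj : oj = (qj, 0) := by rw [hqj]; rfl
  have hok : ok = (qk, 0) := by rw [hqk]; rfl
  have pi : qi.re = 0 ∧ qi.imI = 1 ∧ qi.imJ = 0 ∧ qi.imK = 0 := by rw [hqi]; exact ⟨rfl, rfl, rfl, rfl⟩
  have pj : qj.re = 0 ∧ qj.imI = 0 ∧ qj.imJ = 1 ∧ qj.imK = 0 := by rw [hqj]; exact ⟨rfl, rfl, rfl, rfl⟩
  have pk : qk.re = 0 ∧ qk.imI = 0 ∧ qk.imJ = 0 ∧ qk.imK = 1 := by rw [hqk]; exact ⟨rfl, rfl, rfl, rfl⟩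
  simp only [oone, hoi, hoj, hok, ol, oh, omul, Prod.fst_add, Prod.snd_add,
    Prod.smul_fst, Prod.smul_snd, Prod.smul_mk, Prod.mk_add_mk]
  refine Prod.ext ?_ ?_ <;> ext <;> simp [pi, pj, pk, Quaternion.re_mul, Quaternion.imI_mul,
    Quaternion.imJ_mul, Quaternion.imK_mul] <;> ring

lemma binner_rep (c : Fin 8 → ℤ) : binner (∑ i, c i • u i) (∑ i, c i • u i) =
    ((8 * ((c 0 - c 5 - c 6 - c 7)^2 + (c 1 + c 4 + c 6 - c 7)^2 +
      (c 2 + c 4 - c 5 + c 7)^2 + (c 3 + c 4 + c 5 - c 6)^2 +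
      (c 4)^2 + (c 5)^2 + (c 6)^2 + (c 7)^2) : ℤ) : ℝ) := by
  have hbx : ∀ x : Octo, binner x x = 2 * onorm x := by
    intro x
    simp [binner, onorm]
    ring
  rw [hbx, rep_eq]
  simp [onorm]
  push_cast
  ring_nf

/-- the minimum of the direct Okubo shadow is `8`: every nonzero
`x ∈ L_Ok` has `⟨x,x⟩ ≥ 8`, the value `8` is attained at `2b₀ ∈ L_Ok`, and in
particular `L_Ok` contains no vector of norm `2`. -/
theorem okubo_shadow_minimum :
    (∀ x ∈ LOk, x ≠ 0 → 8 ≤ binner x x) ∧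
    ((2 : ℤ) • b 0 ∈ LOk ∧ binner ((2 : ℤ) • b 0) ((2 : ℤ) • b 0) = 8) ∧
    ¬ ∃ x ∈ LOk, binner x x = 2 := by
  have key : ∀ x ∈ LOk, ∃ N : ℤ, binner x x = ((8 * N : ℤ) : ℝ) ∧ 0 ≤ N ∧ (x ≠ 0 → 1 ≤ N) := by
    intro x hx
    rw [LOk, Submodule.mem_span_range_iff_exists_fun] at hx
    obtain ⟨c, hc⟩ := hx
    refine ⟨(c 0 - c 5 - c 6 - c 7)^2 + (c 1 + c 4 + c 6 - c 7)^2 +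
      (c 2 + c 4 - c 5 + c 7)^2 + (c 3 + c 4 + c 5 - c 6)^2 +
      (c 4)^2 + (c 5)^2 + (c 6)^2 + (c 7)^2, ?_, by positivity, ?_⟩
    · rw [← hc, binner_rep]
    · intro hx0
      by_contra h
      push_neg at h
      have s0 := sq_nonneg (c 0 - c 5 - c 6 - c 7)
      have s1 := sq_nonneg (c 1 + c 4 + c 6 - c 7)
      have s2 := sq_nonneg (c 2 + c 4 - c 5 + c 7)
      have s3 := sq_nonneg (c 3 + c 4 + c 5 - c 6)
      have s4 := sq_nonneg (c 4)
      have s5 := sq_nonneg (c 5)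
      have s6 := sq_nonneg (c 6)
      have s7 := sq_nonneg (c 7)
      have q0 : (c 0 - c 5 - c 6 - c 7)^2 = 0 := by linarith
      have q1 : (c 1 + c 4 + c 6 - c 7)^2 = 0 := by linarith
      have q2 : (c 2 + c 4 - c 5 + c 7)^2 = 0 := by linarith
      have q3 : (c 3 + c 4 + c 5 - c 6)^2 = 0 := by linarith
      have q4 : (c 4)^2 = 0 := by linarith
      have q5 : (c 5)^2 = 0 := by linarith
      have q6 : (c 6)^2 = 0 := by linarith
      have q7 : (c 7)^2 = 0 := by linarith
      have e0 : c 0 - c 5 - c 6 - c 7 = 0 := by exact pow_eq_zero_iff (two_ne_zero) |>.mp q0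
      have e1 : c 1 + c 4 + c 6 - c 7 = 0 := by exact pow_eq_zero_iff (two_ne_zero) |>.mp q1
      have e2 : c 2 + c 4 - c 5 + c 7 = 0 := by exact pow_eq_zero_iff (two_ne_zero) |>.mp q2
      have e3 : c 3 + c 4 + c 5 - c 6 = 0 := by exact pow_eq_zero_iff (two_ne_zero) |>.mp q3
      have e4 : c 4 = 0 := by exact pow_eq_zero_iff (two_ne_zero) |>.mp q4
      have e5 : c 5 = 0 := by exact pow_eq_zero_iff (two_ne_zero) |>.mp q5
      have e6 : c 6 = 0 := by exact pow_eq_zero_iff (two_ne_zero) |>.mp q6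
      have e7 : c 7 = 0 := by exact pow_eq_zero_iff (two_ne_zero) |>.mp q7
      apply hx0
      rw [← hc, rep_eq, e0, e1, e2, e3, e4, e5, e6, e7]
      simp [Prod.ext_iff, QuaternionAlgebra.ext_iff]
      rfl
  have hu0 : (2 : ℤ) • b 0 = u 0 := rfl
  refine ⟨?_, ⟨?_, ?_⟩, ?_⟩
  · intro x hx hx0
    obtain ⟨N, hb, _, hN⟩ := key x hx
    have := hN hx0
    rw [hb]
    exact_mod_cast (by linarith : (8:ℤ) ≤ 8 * N)
  · rw [hu0]
    exact Submodule.subset_span ⟨0, rfl⟩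
  · rw [hu0]
    have : u 0 = (2:ℤ) • oone := rfl
    rw [this, ← Int.cast_smul_eq_zsmul ℝ]
    simp [binner, onorm, oone, Prod.smul_fst, Prod.smul_snd]
    norm_num
  · rintro ⟨x, hx, h2⟩
    obtain ⟨N, hb, _, _⟩ := key x hx
    rw [hb] at h2
    have : (8 * N : ℤ) = 2 := by exact_mod_cast h2
    omega

end
end
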